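/- Let (π, W) be a finite-dimensional complex representation of J. Then there is an isomorphism of L-representations (ℂ[G] ⊗_{ℂ[J]} W)^U ≅ W^U ⊕ (W^V)^w, where (ℂ[G] ⊗_{ℂ[J]} W)^U is the subspace of U-fixed vectors of the induced ℂ[G]-module (an L-subrepresentation since L normalizes U), W^U and W^V are the U- and V-fixed subspaces of W, and (W^V)^w is the space W^V with L acting by l · x := π(w l w⁻¹)x. -/

import Mathlib

open scoped BigOperators

set_option maxHeartbeats 1000000
set_option synthInstance.maxHeartbeats 1000000

noncomputable section

namespace Parahoric

variable {G : Type*} [Group G]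

/-- An Iwahori decomposition of the subgroup `I` of `G` as `I = W·M·W̄`:
`M` normalizes `W` and `W̄`, and the multiplication map `W × M × W̄ → I` is a bijection. -/
def IwahoriDecomp (I W M Wb : Subgroup G) : Prop :=
  M ≤ Subgroup.normalizer (W : Set G) ∧ M ≤ Subgroup.normalizer (Wb : Set G) ∧
    Set.BijOn (fun q : G × G × G => q.1 * q.2.1 * q.2.2)
      ((W : Set G) ×ˢ (M : Set G) ×ˢ (Wb : Set G)) (I : Set G)

/-- The averaging idempotent `e_H = |H|⁻¹ ∑_{h ∈ H} h` in the group algebra `ℂ[G]`. -/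
def algAvg (H : Subgroup G) [Finite H] : MonoidAlgebra ℂ G :=
  letI : Fintype H := Fintype.ofFinite H
  (Nat.card H : ℂ)⁻¹ • ∑ h : H, MonoidAlgebra.of ℂ G (h : G)

/-- The canonical algebra embedding `ℂ[L] → ℂ[G]` for a subgroup `L ≤ G`. -/
def algMap (L : Subgroup G) : MonoidAlgebra ℂ ↥L →ₐ[ℂ] MonoidAlgebra ℂ G :=
  MonoidAlgebra.mapDomainAlgHom ℂ ℂ L.subtype

/-- `ℂ[G]·e`, the range of right multiplication by `e` on the group algebra. -/
def ralg (G : Type*) [Group G] (e : MonoidAlgebra ℂ G) : Submodule ℂ (MonoidAlgebra ℂ G) :=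
  LinearMap.range (LinearMap.mulRight ℂ e)

section Reps

variable {W W₁ W₂ : Type*} [AddCommGroup W] [Module ℂ W]
  [AddCommGroup W₁] [Module ℂ W₁] [AddCommGroup W₂] [Module ℂ W₂]

/-- A ℂ-submodule is stable under a representation. -/
def Stable (π : Representation ℂ G W) (S : Submodule ℂ W) : Prop :=
  ∀ g : G, ∀ x ∈ S, π g x ∈ S

/-- Irreducibility of a representation (equivalently, simplicity of the corresponding
`ℂ[G]`-module): the space is nonzero and has no nontrivial invariant subspaces. -/
def IsIrreducible (π : Representation ℂ G W) : Prop :=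
  (⊤ : Submodule ℂ W) ≠ ⊥ ∧
    ∀ T : Submodule ℂ W, Stable π T → T = ⊥ ∨ T = ⊤

/-- Irreducibility of an invariant subspace `S` of an ambient representation. -/
def IsIrreducibleSub (π : Representation ℂ G W) (S : Submodule ℂ W) : Prop :=
  S ≠ ⊥ ∧ ∀ T : Submodule ℂ W, T ≤ S → Stable π T → T = ⊥ ∨ T = S

/-- The space `Hom_G(ρ, τ)` of intertwining operators. -/
def repHom (ρ : Representation ℂ G W₁) (τ : Representation ℂ G W₂) :
    Submodule ℂ (W₁ →ₗ[ℂ] W₂) where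
  carrier := {φ | ∀ (g : G) (x : W₁), φ (ρ g x) = τ g (φ x)}
  add_mem' := by
    intro φ ψ hφ hψ g x
    simp [hφ g x, hψ g x]
  zero_mem' := by intro g x; simp
  smul_mem' := by
    intro c φ hφ g x
    simp [hφ g x]

/-- `Hom_G(ρ, τ|_T)` where the target is an invariant subspace `T` of `τ`. -/
def homFullSub (ρ : Representation ℂ G W₁) (τ : Representation ℂ G W₂)
    (T : Submodule ℂ W₂) : Submodule ℂ (W₁ →ₗ[ℂ] ↥T) where
  carrier := {φ | ∀ (g : G) (x : W₁), (φ (ρ g x) : W₂) = τ g ↑(φ x)}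
  add_mem' := by
    intro φ ψ hφ hψ g x
    simp [hφ g x, hψ g x]
  zero_mem' := by intro g x; simp
  smul_mem' := by
    intro c φ hφ g x
    simp [hφ g x]

/-- `Hom_G(ρ|_S, τ)` where the source is an invariant subspace `S` of `ρ`. -/
def homSubFull (ρ : Representation ℂ G W₁) (S : Submodule ℂ W₁)
    (τ : Representation ℂ G W₂) : Submodule ℂ (↥S →ₗ[ℂ] W₂) where
  carrier := {φ | ∀ (g : G) (x : S) (hx : ρ g ↑x ∈ S), φ ⟨ρ g ↑x, hx⟩ = τ g (φ x)}
  add_mem' := by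
    intro φ ψ hφ hψ g x hx
    simp [hφ g x hx, hψ g x hx]
  zero_mem' := by intro g x hx; simp
  smul_mem' := by
    intro c φ hφ g x hx
    simp [hφ g x hx]

/-- `Hom_G(ρ|_S, τ|_T)` between invariant subspaces. -/
def homSubSub (ρ : Representation ℂ G W₁) (S : Submodule ℂ W₁)
    (τ : Representation ℂ G W₂) (T : Submodule ℂ W₂) : Submodule ℂ (↥S →ₗ[ℂ] ↥T) where
  carrier := {φ | ∀ (g : G) (x : S) (hx : ρ g ↑x ∈ S), (φ ⟨ρ g ↑x, hx⟩ : W₂) = τ g ↑(φ x)}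
  add_mem' := by
    intro φ ψ hφ hψ g x hx
    simp [hφ g x hx, hψ g x hx]
  zero_mem' := by intro g x hx; simp
  smul_mem' := by
    intro c φ hφ g x hx
    simp [hφ g x hx]

/-- Isomorphism of representations. -/
def IsoRep (ρ : Representation ℂ G W₁) (τ : Representation ℂ G W₂) : Prop :=
  ∃ e : W₁ ≃ₗ[ℂ] W₂, ∀ (g : G) (x : W₁), e (ρ g x) = τ g (e x)

/-- Equivariant isomorphism from a representation onto an invariant subspace. -/
def IsoFullSub (ρ : Representation ℂ G W₁) (τ : Representation ℂ G W₂)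
    (T : Submodule ℂ W₂) : Prop :=
  ∃ e : W₁ ≃ₗ[ℂ] ↥T, ∀ (g : G) (x : W₁), (e (ρ g x) : W₂) = τ g ↑(e x)

/-- Equivariant isomorphism from an invariant subspace onto a representation. -/
def IsoSubFull (ρ : Representation ℂ G W₁) (S : Submodule ℂ W₁)
    (τ : Representation ℂ G W₂) : Prop :=
  ∃ e : ↥S ≃ₗ[ℂ] W₂, ∀ (g : G) (x : S) (hx : ρ g ↑x ∈ S), e ⟨ρ g ↑x, hx⟩ = τ g (e x)

/-- Equivariant isomorphism between invariant subspaces. -/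
def IsoSubSub (ρ : Representation ℂ G W₁) (S : Submodule ℂ W₁)
    (τ : Representation ℂ G W₂) (T : Submodule ℂ W₂) : Prop :=
  ∃ e : ↥S ≃ₗ[ℂ] ↥T, ∀ (g : G) (x : S) (hx : ρ g ↑x ∈ S),
    (e ⟨ρ g ↑x, hx⟩ : W₂) = τ g ↑(e x)

/-- The operator `π(e_H) = |H|⁻¹ ∑_{h ∈ H} π(h)`. -/
def avgMap (π : Representation ℂ G W) (H : Subgroup G) [Finite H] : W →ₗ[ℂ] W :=
  letI : Fintype H := Fintype.ofFinite H
  (Nat.card H : ℂ)⁻¹ • ∑ h : H, π (h : G)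

/-- The subspace `W^H` of `H`-fixed vectors. -/
def fixedSub (π : Representation ℂ G W) (H : Subgroup G) : Submodule ℂ W where
  carrier := {w | ∀ h ∈ H, π h w = w}
  add_mem' := by
    intro a b ha hb h hh
    simp [ha h hh, hb h hh]
  zero_mem' := by intro h hh; simp
  smul_mem' := by
    intro c a ha h hh
    simp [ha h hh]

/-- Restriction of a representation to a subgroup. -/
def resRep (π : Representation ℂ G W) (L : Subgroup G) : Representation ℂ ↥L W :=
  π.comp L.subtype

/-- The right-translation representation of `G` on the function space `G → W`. -/
def rtRep (G : Type*) [Group G] (W : Type*) [AddCommGroup W] [Module ℂ W] :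
    Representation ℂ G (G → W) where
  toFun g :=
    { toFun := fun f x => f (x * g)
      map_add' := fun _ _ => rfl
      map_smul' := fun _ _ => rfl }
  map_one' := LinearMap.ext fun f => funext fun x => by simp
  map_mul' := fun g₁ g₂ => LinearMap.ext fun f => funext fun x => by
    simp [mul_assoc]

/-- The left-translation representation of `G` on the function space `G → W`. -/
def ltRep (G : Type*) [Group G] (W : Type*) [AddCommGroup W] [Module ℂ W] :
    Representation ℂ G (G → W) where
  toFun g :=
    { toFun := fun f x => f (g⁻¹ * x)
      map_add' := fun _ _ => rfl
      map_smul' := fun _ _ => rfl }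
  map_one' := LinearMap.ext fun f => funext fun x => by simp
  map_mul' := fun g₁ g₂ => LinearMap.ext fun f => funext fun x => by
    simp [mul_assoc]

/-- Left translation by a fixed group element, as a linear operator on `G → W`. -/
def lTrans (W : Type*) [AddCommGroup W] [Module ℂ W] (g : G) : (G → W) →ₗ[ℂ] (G → W) where
  toFun f := fun x => f (g * x)
  map_add' := fun _ _ => rfl
  map_smul' := fun _ _ => rfl

/-- The averaging operator `I_U : f ↦ (j ↦ |U|⁻¹ ∑_{u ∈ U} f(u·j))` on `G → W`. -/
def avgL (U : Subgroup G) [Finite U] (W : Type*) [AddCommGroup W] [Module ℂ W] :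
    (G → W) →ₗ[ℂ] (G → W) :=
  letI : Fintype U := Fintype.ofFinite U
  (Nat.card U : ℂ)⁻¹ • ∑ u : U, lTrans W (u : G)

/-- The module `Ind_{LU}^G (infl_L^{LU} ρ)` of functions `f : G → W` with
`f(u·l·g) = ρ(l)·f(g)` for `u ∈ U`, `l ∈ L`; `G` acts by right translation (`rtRep`).
This is the standard concrete model of `ℂ[G]·e_U ⊗_{ℂ[L]} ρ`. -/
def indInfl (U L : Subgroup G) {W : Type*} [AddCommGroup W] [Module ℂ W]
    (ρ : Representation ℂ ↥L W) : Submodule ℂ (G → W) where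
  carrier := {f | ∀ (u l g : G) (hu : u ∈ U) (hl : l ∈ L),
    f (u * l * g) = ρ ⟨l, hl⟩ (f g)}
  add_mem' := by
    intro f₁ f₂ h₁ h₂ u l g hu hl
    simp [h₁ u l g hu hl, h₂ u l g hu hl]
  zero_mem' := by intro u l g hu hl; simp
  smul_mem' := by
    intro c f hf u l g hu hl
    simp [hf u l g hu hl]

/-- Parahoric induction `i_{U,V} ρ = ℂ[G]e_V e_U ⊗_{ℂ[L]} ρ`, realized concretely as the
image of the averaging operator `I_U` on `Ind_{LV}^G (infl ρ)`; `G` acts by `rtRep`. -/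
def parInd (U L V : Subgroup G) [Finite U] {W : Type*} [AddCommGroup W] [Module ℂ W]
    (ρ : Representation ℂ ↥L W) : Submodule ℂ (G → W) :=
  (indInfl V L ρ).map (avgL U W)

/-- Parahoric restriction `r_{U,V} π`: the image of the operator `π(e_U)·π(e_V)`. -/
def parRes (π : Representation ℂ G W) (U V : Subgroup G) [Finite U] [Finite V] :
    Submodule ℂ W :=
  LinearMap.range (avgMap π U ∘ₗ avgMap π V)

/-- Conjugation `l ↦ w·l·w⁻¹` as an endomorphism of a subgroup `L` normalized by `w`. -/
def conjHom (L : Subgroup G) (w : G) (hw : ∀ l ∈ L, w * l * w⁻¹ ∈ L) : ↥L →* ↥L where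
  toFun l := ⟨w * ↑l * w⁻¹, hw ↑l l.2⟩
  map_one' := by ext; simp
  map_mul' := fun a b => by ext; simp [mul_assoc]

/-- External direct sum of two representations of the same group. -/
def pairRep (ρ : Representation ℂ G W₁) (τ : Representation ℂ G W₂) :
    Representation ℂ G (W₁ × W₂) where
  toFun g := (ρ g).prodMap (τ g)
  map_one' := by ext x <;> simp
  map_mul' := fun g₁ g₂ => by ext x <;> simp

/-- The induced module `ℂ[G] ⊗_{ℂ[J]} W` (for `J ≤ G` of finite index this is all of the
induced module; in general, its "compactly induced" variant is `cInd`): functions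
`f : G → W` with `f(g·j) = π(j)⁻¹ f(g)`, the action of `G` being left translation. -/
def indUp (J : Subgroup G) {W : Type*} [AddCommGroup W] [Module ℂ W]
    (π : Representation ℂ ↥J W) : Submodule ℂ (G → W) where
  carrier := {f | ∀ (g : G) (j : ↥J), f (g * ↑j) = π j⁻¹ (f g)}
  add_mem' := by
    intro f₁ f₂ h₁ h₂ g j
    simp [h₁ g j, h₂ g j]
  zero_mem' := by intro g j; simp
  smul_mem' := by
    intro c f hf g j
    simp [hf g j]

/-- The induced module `ℂ[G] ⊗_{ℂ[J]} W` for an arbitrary subgroup `J` of a (possibly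
infinite) group `G`: functions `f : G → W` with `f(g·j) = π(j)⁻¹ f(g)` supported on
finitely many cosets `g·J`; the action of `G` is left translation (`ltRep`). -/
def cInd (J : Subgroup G) {W : Type*} [AddCommGroup W] [Module ℂ W]
    (π : Representation ℂ ↥J W) : Submodule ℂ (G → W) where
  carrier := {f | (∀ (g : G) (j : ↥J), f (g * ↑j) = π j⁻¹ (f g)) ∧
    ∃ S : Set G, S.Finite ∧ ∀ g : G, f g ≠ 0 → ∃ s ∈ S, ∃ j : ↥J, g = s * ↑j}
  add_mem' := by
    rintro f₁ f₂ ⟨h₁, S₁, hS₁, hS₁'⟩ ⟨h₂, S₂, hS₂, hS₂'⟩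
    refine ⟨fun g j => by simp [h₁ g j, h₂ g j], S₁ ∪ S₂, hS₁.union hS₂, fun g hg => ?_⟩
    by_cases hf₁ : f₁ g = 0
    · have hf₂ : f₂ g ≠ 0 := by
        intro h
        exact hg (by simp [Pi.add_apply, hf₁, h])
      obtain ⟨s, hs, j, hj⟩ := hS₂' g hf₂
      exact ⟨s, Set.mem_union_right _ hs, j, hj⟩
    · obtain ⟨s, hs, j, hj⟩ := hS₁' g hf₁
      exact ⟨s, Set.mem_union_left _ hs, j, hj⟩
  zero_mem' := by
    refine ⟨fun g j => by simp, ∅, Set.finite_empty, fun g hg => absurd rfl hg⟩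
  smul_mem' := by
    rintro c f ⟨h, S, hS, hS'⟩
    refine ⟨fun g j => by simp [h g j], S, hS, fun g hg => ?_⟩
    apply hS'
    intro h0
    exact hg (by simp [Pi.smul_apply, h0])

/-- The space of functions `f : J → ℂ` with `f(b·g) = χ(b)·f(g)`: the concrete model of the
induced representation `Ind_B^J χ` of a one-dimensional character, `J` acting by `rtRep`. -/
def indChar {J : Type*} [Group J] (B : Subgroup J) (χ : ↥B →* ℂˣ) :
    Submodule ℂ (J → ℂ) where
  carrier := {f | ∀ (b : ↥B) (g : J), f (↑b * g) = (χ b : ℂ) * f g}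
  add_mem' := by
    intro f₁ f₂ h₁ h₂ b g
    simp [h₁ b g, h₂ b g, mul_add]
  zero_mem' := by intro b g; simp
  smul_mem' := by
    intro c f hf b g
    simp [hf b g]
    ring

/-- The space `Hom_{J ∩ t⁻¹Jt}(π, π^t)` of linear maps `φ` with
`φ ∘ π(x) = π(t·x·t⁻¹) ∘ φ` for all `x ∈ J ∩ t⁻¹Jt`. -/
def twistedIntertwiners {W : Type*} [AddCommGroup W] [Module ℂ W]
    (J : Subgroup G) (π : Representation ℂ ↥J W) (t : G) :
    Submodule ℂ (W →ₗ[ℂ] W) where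
  carrier := {φ | ∀ (x : G) (hx : x ∈ J) (hx' : t * x * t⁻¹ ∈ J),
    φ ∘ₗ π ⟨x, hx⟩ = π ⟨t * x * t⁻¹, hx'⟩ ∘ₗ φ}
  add_mem' := by
    intro φ ψ hφ hψ x hx hx'
    simp only [LinearMap.add_comp, LinearMap.comp_add, hφ x hx hx', hψ x hx hx']
  zero_mem' := by intro x hx hx'; simp
  smul_mem' := by
    intro c φ hφ x hx hx'
    simp only [LinearMap.smul_comp, LinearMap.comp_smul, hφ x hx hx']

/-- The dimension `dim_ℂ S` of a subspace `S` (e.g. of a space of intertwining maps). -/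
def dimC {M : Type*} [AddCommGroup M] [Module ℂ M] (S : Submodule ℂ M) : ℕ :=
  Module.finrank ℂ ↥S

/-- Finite-dimensionality of a subspace over `ℂ`. -/
def IsFinDimSub {M : Type*} [AddCommGroup M] [Module ℂ M] (S : Submodule ℂ M) : Prop :=
  FiniteDimensional ℂ ↥S

end Reps


section AuxHelpers
open Matrix

section AuxMatrix
variable {R : Type*} [CommRing R]

def elemU (b : R) : SpecialLinearGroup (Fin 2) R :=
  ⟨!![1, b; 0, 1], by simp [Matrix.det_fin_two_of]⟩

def elemJm (u : Rˣ) (d : R) : SpecialLinearGroup (Fin 2) R :=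
  ⟨!![(u : R), d; 0, ((u⁻¹ : Rˣ) : R)], by simp [Matrix.det_fin_two_of]⟩

def negE : SpecialLinearGroup (Fin 2) R :=
  ⟨!![-1, 0; 0, -1], by simp [Matrix.det_fin_two_of]⟩

lemma det_rel (g : SpecialLinearGroup (Fin 2) R) :
    (g : Matrix (Fin 2) (Fin 2) R) 0 0 * (g : Matrix (Fin 2) (Fin 2) R) 1 1 -
      (g : Matrix (Fin 2) (Fin 2) R) 0 1 * (g : Matrix (Fin 2) (Fin 2) R) 1 0 = 1 := by
  have := g.2
  rwa [Matrix.det_fin_two] at this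

lemma w_inv_coe (w : SpecialLinearGroup (Fin 2) R)
    (hw : (w : Matrix (Fin 2) (Fin 2) R) = !![0, -1; 1, 0]) :
    ((w⁻¹ : SpecialLinearGroup (Fin 2) R) : Matrix (Fin 2) (Fin 2) R)
    = !![0, 1; -1, 0] := by
  rw [Matrix.SpecialLinearGroup.coe_inv, hw, Matrix.adjugate_fin_two]
  norm_num

lemma w_sq (w : SpecialLinearGroup (Fin 2) R)
    (hw : (w : Matrix (Fin 2) (Fin 2) R) = !![0, -1; 1, 0]) : w * w = negE := by
  ext i j
  fin_cases i <;> fin_cases j <;>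
    simp [negE, Matrix.mul_apply, Fin.sum_univ_two, hw]

lemma negE_comm (g : SpecialLinearGroup (Fin 2) R) : negE * g = g * negE := by
  ext i j
  simp only [Matrix.SpecialLinearGroup.coe_mul]
  fin_cases i <;> fin_cases j <;>
    simp [negE, Matrix.mul_apply, Fin.sum_univ_two]

lemma negE_mul_negE : (negE : SpecialLinearGroup (Fin 2) R) * negE = 1 := by
  ext i j
  simp only [Matrix.SpecialLinearGroup.coe_mul]
  fin_cases i <;> fin_cases j <;>
    simp [negE, Matrix.mul_apply, Fin.sum_univ_two]

lemma elemU_mul (a b : R) : elemU a * elemU b = elemU (a + b) := by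
  ext i j
  simp only [Matrix.SpecialLinearGroup.coe_mul]
  fin_cases i <;> fin_cases j <;>
    simp [elemU, Matrix.mul_apply, Fin.sum_univ_two]
  ring

lemma elemU_zero : (elemU 0 : SpecialLinearGroup (Fin 2) R) = 1 := by
  ext i j
  fin_cases i <;> fin_cases j <;>
    simp [elemU]

lemma elemU_inv (a : R) : (elemU a)⁻¹ = elemU (-a) := by
  apply inv_eq_of_mul_eq_one_right
  rw [elemU_mul, add_neg_cancel, elemU_zero]

lemma decomp (w : SpecialLinearGroup (Fin 2) R)
    (hw : (w : Matrix (Fin 2) (Fin 2) R) = !![0, -1; 1, 0])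
    (g : SpecialLinearGroup (Fin 2) R) (u : Rˣ)
    (hu : (u : R) = (g : Matrix (Fin 2) (Fin 2) R) 1 0) :
    g = elemU ((g : Matrix (Fin 2) (Fin 2) R) 0 0 * ((u⁻¹ : Rˣ) : R)) * w *
      elemJm u ((g : Matrix (Fin 2) (Fin 2) R) 1 1) := by
  have hdet := det_rel g
  have hui : ((u⁻¹ : Rˣ) : R) * (g : Matrix (Fin 2) (Fin 2) R) 1 0 = 1 := by
    rw [← hu]; exact u.inv_mul
  ext i j
  simp only [Matrix.SpecialLinearGroup.coe_mul]
  fin_cases i <;> fin_cases j <;>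
    simp [elemU, elemJm, Matrix.mul_apply, Fin.sum_univ_two, hw, hu]
  · rw [mul_assoc, hui, mul_one]
  · linear_combination (-((u⁻¹ : Rˣ) : R)) * hdet - (g : Matrix (Fin 2) (Fin 2) R) 0 1 * hui

lemma row1 (u g : SpecialLinearGroup (Fin 2) R) (b : R)
    (hub : (u : Matrix (Fin 2) (Fin 2) R) = !![1, b; 0, 1]) (i : Fin 2) :
    ((u * g : SpecialLinearGroup (Fin 2) R) : Matrix (Fin 2) (Fin 2) R) 1 i
      = (g : Matrix (Fin 2) (Fin 2) R) 1 i := by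
  simp [Matrix.mul_apply, Fin.sum_univ_two, hub]

lemma mul10 (g j : SpecialLinearGroup (Fin 2) R) :
    ((g * j : SpecialLinearGroup (Fin 2) R) : Matrix (Fin 2) (Fin 2) R) 1 0
      = (g : Matrix (Fin 2) (Fin 2) R) 1 0 * (j : Matrix (Fin 2) (Fin 2) R) 0 0
        + (g : Matrix (Fin 2) (Fin 2) R) 1 1 * (j : Matrix (Fin 2) (Fin 2) R) 1 0 := by
  simp [Matrix.mul_apply, Fin.sum_univ_two]

lemma conjU_coe (w : SpecialLinearGroup (Fin 2) R)
    (hw : (w : Matrix (Fin 2) (Fin 2) R) = !![0, -1; 1, 0]) (b : R) :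
    ((w⁻¹ * elemU b * w : SpecialLinearGroup (Fin 2) R) : Matrix (Fin 2) (Fin 2) R)
      = !![1, 0; -b, 1] := by
  have h1 := w_inv_coe w hw
  ext i j
  simp only [Matrix.SpecialLinearGroup.coe_mul]
  fin_cases i <;> fin_cases j <;>
    simp [elemU, Matrix.mul_apply, Fin.sum_univ_two, hw, h1]

lemma conjV_coe (w v : SpecialLinearGroup (Fin 2) R)
    (hw : (w : Matrix (Fin 2) (Fin 2) R) = !![0, -1; 1, 0]) (c : R)
    (hv : (v : Matrix (Fin 2) (Fin 2) R) = !![1, 0; c, 1]) :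
    ((w⁻¹ * v * w : SpecialLinearGroup (Fin 2) R) : Matrix (Fin 2) (Fin 2) R)
      = !![1, -c; 0, 1] := by
  have h1 := w_inv_coe w hw
  ext i j
  fin_cases i <;> fin_cases j <;>
    simp [Matrix.mul_apply, Fin.sum_univ_two, hw, h1, hv]

end AuxMatrix

section AuxZMod
variable {p n : ℕ} [Fact p.Prime] [NeZero (p ^ n)]

lemma nonunit_iff (hn : 1 ≤ n) (a : ZMod (p ^ n)) :
    ¬ IsUnit a ↔ ∃ b, a = (p : ZMod (p ^ n)) * b := by
  haveI : Fact (1 < p ^ n) := ⟨Nat.one_lt_pow (by omega) (Fact.out : p.Prime).one_lt⟩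
  constructor
  · intro h
    have hv : ((a.val : ℕ) : ZMod (p ^ n)) = a := ZMod.natCast_rightInverse a
    by_cases hd : p ∣ a.val
    · obtain ⟨t, ht⟩ := hd
      exact ⟨(t : ZMod (p ^ n)), by rw [← hv, ht]; push_cast; ring⟩
    · exfalso
      apply h
      rw [← hv, ZMod.isUnit_iff_coprime]
      exact (Nat.Prime.coprime_iff_not_dvd (Fact.out : p.Prime)).2 hd |>.symm.pow_right n
  · rintro ⟨b, rfl⟩ hu
    have hp : IsUnit (p : ZMod (p ^ n)) := isUnit_of_mul_isUnit_left hu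
    have h0 : ((p : ZMod (p ^ n))) ^ n = 0 := by
      have : ((p ^ n : ℕ) : ZMod (p ^ n)) = 0 := ZMod.natCast_self _
      push_cast at this; exact this
    have := hp.pow n
    rw [h0] at this
    exact not_isUnit_zero this

lemma unit_add_nonunit (hn : 1 ≤ n) {a b : ZMod (p ^ n)} (ha : IsUnit a)
    (hb : ¬ IsUnit b) : IsUnit (a + b) := by
  by_contra h
  rw [nonunit_iff hn] at h hb
  obtain ⟨s, hs⟩ := h; obtain ⟨t, ht⟩ := hb
  exact ((nonunit_iff hn a).2 ⟨s - t, by rw [mul_sub, ← hs, ← ht]; ring⟩) ha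

lemma entry_unit (hn : 1 ≤ n) (g j : SpecialLinearGroup (Fin 2) (ZMod (p ^ n))) (t : ZMod (p ^ n))
    (hj : (j : Matrix (Fin 2) (Fin 2) (ZMod (p ^ n))) 1 0 = (p : ZMod (p ^ n)) * t) :
    IsUnit (((g * j : SpecialLinearGroup (Fin 2) (ZMod (p ^ n))) :
      Matrix (Fin 2) (Fin 2) (ZMod (p ^ n))) 1 0) ↔
    IsUnit ((g : Matrix (Fin 2) (Fin 2) (ZMod (p ^ n))) 1 0) := by
  have hdj := det_rel j
  have hj00 : IsUnit ((j : Matrix (Fin 2) (Fin 2) (ZMod (p ^ n))) 0 0) := by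
    have h1 : IsUnit ((j : Matrix (Fin 2) (Fin 2) (ZMod (p ^ n))) 0 0 *
        (j : Matrix (Fin 2) (Fin 2) (ZMod (p ^ n))) 1 1) := by
      have he : (j : Matrix (Fin 2) (Fin 2) (ZMod (p ^ n))) 0 0 *
          (j : Matrix (Fin 2) (Fin 2) (ZMod (p ^ n))) 1 1
          = 1 + (p : ZMod (p ^ n)) * (t * (j : Matrix (Fin 2) (Fin 2) (ZMod (p ^ n))) 0 1) := by
        linear_combination hdj + (j : Matrix (Fin 2) (Fin 2) (ZMod (p ^ n))) 0 1 * hj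
      rw [he]
      exact unit_add_nonunit hn isUnit_one ((nonunit_iff hn _).mpr ⟨_, rfl⟩)
    exact isUnit_of_mul_isUnit_left h1
  rw [mul10, hj]
  by_cases h : IsUnit ((g : Matrix (Fin 2) (Fin 2) (ZMod (p ^ n))) 1 0)
  · simp only [h, iff_true]
    refine unit_add_nonunit hn (h.mul hj00) ?_
    rw [nonunit_iff hn]
    exact ⟨t * (g : Matrix (Fin 2) (Fin 2) (ZMod (p ^ n))) 1 1, by ring⟩
  · simp only [h, iff_false]
    rw [nonunit_iff hn] at h ⊢
    obtain ⟨s, hs⟩ := h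
    exact ⟨s * (j : Matrix (Fin 2) (Fin 2) (ZMod (p ^ n))) 0 0
      + t * (g : Matrix (Fin 2) (Fin 2) (ZMod (p ^ n))) 1 1, by rw [hs]; ring⟩

end AuxZMod

end AuxHelpers

section Statement18

open Matrix

set_option maxHeartbeats 8000000 in
/-- In `G = SL₂(ℤ/pⁿℤ)` with Iwahori subgroup `J = ULV` and Weyl element `w`, for every
finite-dimensional representation `(π, W)` of `J` there is an isomorphism of
`L`-representations `(ℂ[G] ⊗_{ℂ[J]} W)^U ≅ W^U ⊕ (W^V)^w`, where the second summand is
`W^V` with `L` acting through conjugation by `w`. -/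
theorem sl2_induced_U_fixed_vectors
    (p n : ℕ) [Fact p.Prime] [NeZero (p ^ n)] (hn : 1 ≤ n)
    (U L V Jsub : Subgroup (Matrix.SpecialLinearGroup (Fin 2) (ZMod (p ^ n))))
    (hU : (U : Set (Matrix.SpecialLinearGroup (Fin 2) (ZMod (p ^ n)))) =
      {g : Matrix.SpecialLinearGroup (Fin 2) (ZMod (p ^ n)) | ∃ b : ZMod (p ^ n),
        (↑g : Matrix (Fin 2) (Fin 2) (ZMod (p ^ n))) = !![1, b; 0, 1]})
    (hL : (L : Set (Matrix.SpecialLinearGroup (Fin 2) (ZMod (p ^ n)))) =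
      {g : Matrix.SpecialLinearGroup (Fin 2) (ZMod (p ^ n)) | ∃ a : (ZMod (p ^ n))ˣ,
        (↑g : Matrix (Fin 2) (Fin 2) (ZMod (p ^ n))) =
          !![(a : ZMod (p ^ n)), 0; 0, ((a⁻¹ : (ZMod (p ^ n))ˣ) : ZMod (p ^ n))]})
    (hV : (V : Set (Matrix.SpecialLinearGroup (Fin 2) (ZMod (p ^ n)))) =
      {g : Matrix.SpecialLinearGroup (Fin 2) (ZMod (p ^ n)) | ∃ c : ZMod (p ^ n),
        (∃ c' : ZMod (p ^ n), c = (p : ZMod (p ^ n)) * c') ∧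
        (↑g : Matrix (Fin 2) (Fin 2) (ZMod (p ^ n))) = !![1, 0; c, 1]})
    (hJ : (Jsub : Set (Matrix.SpecialLinearGroup (Fin 2) (ZMod (p ^ n)))) =
      {g : Matrix.SpecialLinearGroup (Fin 2) (ZMod (p ^ n)) | ∃ x : ZMod (p ^ n),
        (↑g : Matrix (Fin 2) (Fin 2) (ZMod (p ^ n))) 1 0 = (p : ZMod (p ^ n)) * x})
    (hIw : IwahoriDecomp Jsub U L V)
    (w : Matrix.SpecialLinearGroup (Fin 2) (ZMod (p ^ n)))
    (hw : (↑w : Matrix (Fin 2) (Fin 2) (ZMod (p ^ n))) = !![0, -1; 1, 0])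
    (hwL : ∀ l ∈ L, w * l * w⁻¹ ∈ L)
    (hUJ : U ≤ Jsub) (hVJ : V ≤ Jsub) (hLJ : L ≤ Jsub)
    {W : Type*} [AddCommGroup W] [Module ℂ W] [FiniteDimensional ℂ W]
    (π : Representation ℂ ↥Jsub W) :
    IsoSubSub
      ((ltRep (Matrix.SpecialLinearGroup (Fin 2) (ZMod (p ^ n))) W).comp L.subtype)
      (indUp Jsub π ⊓
        fixedSub (ltRep (Matrix.SpecialLinearGroup (Fin 2) (ZMod (p ^ n))) W) U)
      (pairRep (π.comp (Subgroup.inclusion hLJ))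
        ((π.comp (Subgroup.inclusion hLJ)).comp (conjHom L w hwL)))
      ((fixedSub (π.comp (Subgroup.inclusion hUJ)) ⊤).prod
        (fixedSub (π.comp (Subgroup.inclusion hVJ)) ⊤)) := by
  classical
  -- membership characterizations
  have hJ' : ∀ g : Matrix.SpecialLinearGroup (Fin 2) (ZMod (p ^ n)),
      g ∈ Jsub ↔ ¬ IsUnit ((↑g : Matrix (Fin 2) (Fin 2) (ZMod (p ^ n))) 1 0) := by
    intro g
    rw [← SetLike.mem_coe, hJ]
    simp only [Set.mem_setOf_eq]
    exact (nonunit_iff hn _).symm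
  have hU' : ∀ g : Matrix.SpecialLinearGroup (Fin 2) (ZMod (p ^ n)),
      g ∈ U ↔ ∃ b : ZMod (p ^ n),
        (↑g : Matrix (Fin 2) (Fin 2) (ZMod (p ^ n))) = !![1, b; 0, 1] := by
    intro g
    rw [← SetLike.mem_coe, hU]
    simp only [Set.mem_setOf_eq]
  have hV' : ∀ g : Matrix.SpecialLinearGroup (Fin 2) (ZMod (p ^ n)),
      g ∈ V ↔ ∃ c : ZMod (p ^ n), (∃ c' : ZMod (p ^ n), c = (p : ZMod (p ^ n)) * c') ∧
        (↑g : Matrix (Fin 2) (Fin 2) (ZMod (p ^ n))) = !![1, 0; c, 1] := by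
    intro g
    rw [← SetLike.mem_coe, hV]
    simp only [Set.mem_setOf_eq]
  -- basic elements
  have hnegJ : negE ∈ Jsub := by
    rw [hJ']
    rw [nonunit_iff hn]
    exact ⟨0, by simp [negE]⟩
  have hJmMem : ∀ (u : (ZMod (p ^ n))ˣ) (d : ZMod (p ^ n)), elemJm u d ∈ Jsub := by
    intro u d
    rw [hJ', nonunit_iff hn]
    exact ⟨0, by simp [elemJm]⟩
  have hUmem : ∀ b : ZMod (p ^ n), elemU b ∈ U := by
    intro b
    rw [hU']
    exact ⟨b, rfl⟩
  -- π cancellation helpers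
  have hπc : ∀ (a : ↥Jsub) (v : W), π a (π a⁻¹ v) = v := by
    intro a v
    rw [← Module.End.mul_apply, ← _root_.map_mul, mul_inv_cancel, _root_.map_one, Module.End.one_apply]
  have hπm : ∀ (a b : ↥Jsub) (v : W), π (a * b)⁻¹ v = π b⁻¹ (π a⁻¹ v) := by
    intro a b v
    rw [_root_.mul_inv_rev, _root_.map_mul, Module.End.mul_apply]
  -- fixedness extraction
  have hfixU : ∀ (x : W), x ∈ fixedSub (π.comp (Subgroup.inclusion hUJ)) ⊤ →
      ∀ u (hu : u ∈ U), π ⟨u, hUJ hu⟩ x = x := by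
    intro x hx u hu
    exact hx ⟨u, hu⟩ (Subgroup.mem_top _)
  have hfixV : ∀ (y : W), y ∈ fixedSub (π.comp (Subgroup.inclusion hVJ)) ⊤ →
      ∀ v (hv : v ∈ V), π ⟨v, hVJ hv⟩ y = y := by
    intro y hy v hv
    exact hy ⟨v, hv⟩ (Subgroup.mem_top _)
  -- left invariance for members of the fixed space
  have hSleft : ∀ (f : Matrix.SpecialLinearGroup (Fin 2) (ZMod (p ^ n)) → W),
      f ∈ fixedSub (ltRep (Matrix.SpecialLinearGroup (Fin 2) (ZMod (p ^ n))) W) U →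
      ∀ u (_ : u ∈ U) z, f (u * z) = f z := by
    intro f hf u hu z
    have h1 := hf u⁻¹ (inv_mem hu)
    have h2 := congrFun h1 z
    simpa [ltRep] using h2
  have hind : ∀ (f : Matrix.SpecialLinearGroup (Fin 2) (ZMod (p ^ n)) → W),
      f ∈ indUp Jsub π →
      ∀ g (j : ↥Jsub), f (g * ↑j) = π j⁻¹ (f g) := by
    intro f hf g j
    exact hf g j
  -- the inverse construction
  set F : W × W → (Matrix.SpecialLinearGroup (Fin 2) (ZMod (p ^ n)) → W) := fun z g =>
    if h : IsUnit ((↑g : Matrix (Fin 2) (Fin 2) (ZMod (p ^ n))) 1 0) then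
      π ((⟨negE, hnegJ⟩ : ↥Jsub) *
        ⟨elemJm h.unit ((↑g : Matrix (Fin 2) (Fin 2) (ZMod (p ^ n))) 1 1), hJmMem _ _⟩)⁻¹ z.2
    else
      π (⟨g, (hJ' g).2 h⟩ : ↥Jsub)⁻¹ z.1
    with hFdef
  have hone_nu : ¬ IsUnit ((↑(1 : Matrix.SpecialLinearGroup (Fin 2) (ZMod (p ^ n)))
      : Matrix (Fin 2) (Fin 2) (ZMod (p ^ n))) 1 0) := by
    have h0 : ((↑(1 : Matrix.SpecialLinearGroup (Fin 2) (ZMod (p ^ n)))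
        : Matrix (Fin 2) (Fin 2) (ZMod (p ^ n))) 1 0) = 0 := by
      simp [Matrix.SpecialLinearGroup.coe_one, Matrix.one_apply]
    rw [h0, nonunit_iff hn]
    exact ⟨0, by ring⟩
  have hF1 : ∀ z, F z 1 = z.1 := by
    intro z
    simp only [hFdef]
    rw [dif_neg hone_nu]
    have hone : (⟨(1 : Matrix.SpecialLinearGroup (Fin 2) (ZMod (p ^ n))),
        (hJ' 1).2 hone_nu⟩ : ↥Jsub) = 1 := rfl
    rw [hone, inv_one, _root_.map_one, Module.End.one_apply]
  have hFw : ∀ z, F z w⁻¹ = z.2 := by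
    intro z
    simp only [hFdef]
    have h10 : ((↑(w⁻¹) : Matrix (Fin 2) (Fin 2) (ZMod (p ^ n))) 1 0) = -1 := by
      rw [w_inv_coe w hw]; simp
    have hu : IsUnit ((↑(w⁻¹) : Matrix (Fin 2) (Fin 2) (ZMod (p ^ n))) 1 0) := by
      rw [h10]; exact isUnit_one.neg
    rw [dif_pos hu]
    have hval : (hu.unit : ZMod (p ^ n)) = -1 := by rw [IsUnit.unit_spec, h10]
    have huu : hu.unit * hu.unit = 1 := Units.ext (by rw [Units.val_mul, hval]; norm_num)
    have hinv : ((hu.unit⁻¹ : (ZMod (p ^ n))ˣ) : ZMod (p ^ n)) = -1 := by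
      rw [inv_eq_of_mul_eq_one_right huu, hval]
    have h11 : ((↑(w⁻¹) : Matrix (Fin 2) (Fin 2) (ZMod (p ^ n))) 1 1) = 0 := by
      rw [w_inv_coe w hw]; simp
    have helem : (⟨negE, hnegJ⟩ : ↥Jsub) *
        ⟨elemJm hu.unit ((↑(w⁻¹) : Matrix (Fin 2) (Fin 2) (ZMod (p ^ n))) 1 1),
          hJmMem _ _⟩ = 1 := by
      apply Subtype.ext
      show negE * elemJm hu.unit _ = 1
      ext i j
      simp only [Matrix.SpecialLinearGroup.coe_mul]
      fin_cases i <;> fin_cases j <;>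
        simp [negE, elemJm, Matrix.mul_apply, Fin.sum_univ_two, hval, hinv, h11,
          Matrix.adjugate_fin_two, hw]
    rw [helem, inv_one, _root_.map_one, Module.End.one_apply]
  have hFadd : ∀ z₁ z₂, F (z₁ + z₂) = F z₁ + F z₂ := by
    intro z₁ z₂
    funext g
    simp only [hFdef, Pi.add_apply]
    by_cases h : IsUnit ((↑g : Matrix (Fin 2) (Fin 2) (ZMod (p ^ n))) 1 0) <;> simp [h]
  have hFsmul : ∀ (c : ℂ) z, F (c • z) = c • F z := by
    intro c z
    funext g
    simp only [hFdef, Pi.smul_apply]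
    by_cases h : IsUnit ((↑g : Matrix (Fin 2) (Fin 2) (ZMod (p ^ n))) 1 0) <;> simp [h]
  -- F lands in S
  have hFS : ∀ z : W × W,
      z ∈ (fixedSub (π.comp (Subgroup.inclusion hUJ)) ⊤).prod
        (fixedSub (π.comp (Subgroup.inclusion hVJ)) ⊤) →
      F z ∈ indUp Jsub π ⊓
        fixedSub (ltRep (Matrix.SpecialLinearGroup (Fin 2) (ZMod (p ^ n))) W) U := by
    intro z hz
    obtain ⟨hz1, hz2⟩ := Submodule.mem_prod.mp hz
    rw [Submodule.mem_inf]
    constructor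
    · -- indUp membership
      intro g j
      obtain ⟨t, ht⟩ : ∃ t, ((↑(↑j : Matrix.SpecialLinearGroup (Fin 2) (ZMod (p ^ n)))
          : Matrix (Fin 2) (Fin 2) (ZMod (p ^ n))) 1 0) = (p : ZMod (p ^ n)) * t := by
        have hj2 : (↑j : Matrix.SpecialLinearGroup (Fin 2) (ZMod (p ^ n))) ∈
            (Jsub : Set (Matrix.SpecialLinearGroup (Fin 2) (ZMod (p ^ n)))) := j.2
        rw [hJ] at hj2
        exact hj2
      have hiff := entry_unit hn g ↑j t ht
      by_cases h : IsUnit ((↑g : Matrix (Fin 2) (Fin 2) (ZMod (p ^ n))) 1 0)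
      · have h' : IsUnit ((↑(g * ↑j) : Matrix (Fin 2) (Fin 2) (ZMod (p ^ n))) 1 0) :=
          hiff.2 h
        simp only [hFdef]
        rw [dif_pos h', dif_pos h]
        set a1 : ZMod (p ^ n) := (↑g : Matrix (Fin 2) (Fin 2) (ZMod (p ^ n))) 0 0 *
          ((h.unit⁻¹ : (ZMod (p ^ n))ˣ) : ZMod (p ^ n)) with ha1
        set a2 : ZMod (p ^ n) := (↑(g * ↑j) : Matrix (Fin 2) (Fin 2) (ZMod (p ^ n))) 0 0 *
          ((h'.unit⁻¹ : (ZMod (p ^ n))ˣ) : ZMod (p ^ n)) with ha2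
        set Jg := elemJm h.unit ((↑g : Matrix (Fin 2) (Fin 2) (ZMod (p ^ n))) 1 1) with hJg
        set Jgj := elemJm h'.unit
          ((↑(g * ↑j) : Matrix (Fin 2) (Fin 2) (ZMod (p ^ n))) 1 1) with hJgj
        have hd1 : g = elemU a1 * w * Jg := decomp w hw g h.unit h.unit_spec
        have hd2 : g * ↑j = elemU a2 * w * Jgj := decomp w hw _ h'.unit h'.unit_spec
        set vv := w⁻¹ * ((elemU a2)⁻¹ * elemU a1) * w with hvvdef
        have hkey : Jgj = vv * (Jg * ↑j) := by
          have e1 : elemU a1 * w * Jg * ↑j = elemU a2 * w * Jgj := by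
            rw [← hd1, ← hd2]
          calc Jgj = w⁻¹ * (elemU a2)⁻¹ * (elemU a2 * w * Jgj) := by group
          _ = w⁻¹ * (elemU a2)⁻¹ * (elemU a1 * w * Jg * ↑j) := by rw [← e1]
          _ = vv * (Jg * ↑j) := by rw [hvvdef]; group
        have hvvJ : vv ∈ Jsub := by
          have hv2 : vv = Jgj * (Jg * ↑j)⁻¹ := by rw [hkey]; group
          rw [hv2]
          exact mul_mem (hJmMem _ _) (inv_mem (mul_mem (hJmMem _ _) j.2))
        have hvvmat : (↑vv : Matrix (Fin 2) (Fin 2) (ZMod (p ^ n)))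
            = !![1, 0; -(-a2 + a1), 1] := by
          rw [hvvdef, elemU_inv, elemU_mul]
          exact conjU_coe w hw _
        have h10vv : (↑vv : Matrix (Fin 2) (Fin 2) (ZMod (p ^ n))) 1 0 = -(-a2 + a1) := by
          rw [hvvmat]; simp
        have hvvV : vv ∈ V := by
          obtain ⟨s, hs⟩ : ∃ s, (↑vv : Matrix (Fin 2) (Fin 2) (ZMod (p ^ n))) 1 0
              = (p : ZMod (p ^ n)) * s := by
            have hv3 : vv ∈ (Jsub : Set (Matrix.SpecialLinearGroup (Fin 2)
                (ZMod (p ^ n)))) := hvvJ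
            rw [hJ] at hv3
            exact hv3
          rw [hV']
          exact ⟨-(-a2 + a1), ⟨s, by rw [← h10vv]; exact hs⟩, hvvmat⟩
        have hsub : (⟨negE, hnegJ⟩ : ↥Jsub) * ⟨Jgj, hJmMem _ _⟩ =
            (⟨vv, hvvJ⟩ : ↥Jsub) * ((⟨negE, hnegJ⟩ : ↥Jsub) * ⟨Jg, hJmMem _ _⟩ * j) := by
          apply Subtype.ext
          show negE * Jgj = vv * (negE * Jg * (j : Matrix.SpecialLinearGroup (Fin 2) (ZMod (p ^ n))))
          rw [hkey, show negE * (vv * (Jg * ↑j)) = (negE * vv) * (Jg * ↑j) by group,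
            negE_comm vv]
          group
        rw [hsub, hπm (⟨vv, hvvJ⟩ : ↥Jsub) _ z.2]
        have hzv : π (⟨vv, hvvJ⟩ : ↥Jsub)⁻¹ z.2 = z.2 := by
          have hcoe : (⟨vv, hvvJ⟩ : ↥Jsub)⁻¹ = ⟨vv⁻¹, inv_mem hvvJ⟩ := rfl
          rw [hcoe]
          exact hfixV z.2 hz2 vv⁻¹ (inv_mem hvvV)
        rw [hzv, hπm]
      · have h' : ¬ IsUnit ((↑(g * ↑j) : Matrix (Fin 2) (Fin 2) (ZMod (p ^ n))) 1 0) :=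
          fun hh => h (hiff.1 hh)
        simp only [hFdef]
        rw [dif_neg h', dif_neg h]
        have hmk : (⟨g * ↑j, (hJ' _).2 h'⟩ : ↥Jsub) = ⟨g, (hJ' g).2 h⟩ * j := rfl
        rw [hmk, hπm]
    · -- fixed under U by left translation
      intro u hu
      funext g
      show F z (u⁻¹ * g) = F z g
      obtain ⟨b, hb⟩ := (hU' u⁻¹).1 (inv_mem hu)
      have hrow0 := row1 u⁻¹ g b hb 0
      have hrow1 := row1 u⁻¹ g b hb 1
      simp only [hFdef]
      by_cases h : IsUnit ((↑g : Matrix (Fin 2) (Fin 2) (ZMod (p ^ n))) 1 0)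
      · have h' : IsUnit ((↑(u⁻¹ * g) : Matrix (Fin 2) (Fin 2) (ZMod (p ^ n))) 1 0) := by
          rw [hrow0]; exact h
        rw [dif_pos h', dif_pos h]
        have hun : h'.unit = h.unit :=
          Units.ext (by rw [h'.unit_spec, h.unit_spec, hrow0])
        have hmk : (⟨elemJm h'.unit ((↑(u⁻¹ * g) : Matrix (Fin 2) (Fin 2)
            (ZMod (p ^ n))) 1 1), hJmMem _ _⟩ : ↥Jsub) =
            ⟨elemJm h.unit ((↑g : Matrix (Fin 2) (Fin 2) (ZMod (p ^ n))) 1 1),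
              hJmMem _ _⟩ := by
          apply Subtype.ext
          show elemJm _ _ = elemJm _ _
          rw [hun, hrow1]
        rw [hmk]
      · have h' : ¬ IsUnit ((↑(u⁻¹ * g) : Matrix (Fin 2) (Fin 2) (ZMod (p ^ n))) 1 0) := by
          rw [hrow0]; exact h
        rw [dif_neg h', dif_neg h]
        have hmk : (⟨u⁻¹ * g, (hJ' _).2 h'⟩ : ↥Jsub) =
            ⟨u⁻¹, hUJ (inv_mem hu)⟩ * ⟨g, (hJ' g).2 h⟩ := rfl
        rw [hmk, hπm]
        have hmk2 : (⟨u⁻¹, hUJ (inv_mem hu)⟩ : ↥Jsub)⁻¹ = ⟨u, hUJ hu⟩ := by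
          apply Subtype.ext
          simp
        rw [hmk2, hfixU z.1 hz1 u hu]
  -- evaluations land in T
  have hTmem : ∀ (f : Matrix.SpecialLinearGroup (Fin 2) (ZMod (p ^ n)) → W),
      f ∈ indUp Jsub π ⊓
        fixedSub (ltRep (Matrix.SpecialLinearGroup (Fin 2) (ZMod (p ^ n))) W) U →
      (f 1, f w⁻¹) ∈ (fixedSub (π.comp (Subgroup.inclusion hUJ)) ⊤).prod
        (fixedSub (π.comp (Subgroup.inclusion hVJ)) ⊤) := by
    intro f hf
    obtain ⟨hfi, hffix⟩ := Submodule.mem_inf.mp hf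
    rw [Submodule.mem_prod]
    constructor
    · intro u _
      show π ⟨↑u, hUJ u.2⟩ (f 1) = f 1
      have h1 : f ↑u = f 1 := by
        have := hSleft f hffix ↑u u.2 1
        simpa using this
      have h2 := hind f hfi 1 (⟨↑u, hUJ u.2⟩ : ↥Jsub)
      rw [one_mul] at h2
      have h3 : π (⟨↑u, hUJ u.2⟩ : ↥Jsub)⁻¹ (f 1) = f 1 := by
        rw [← h2]; exact h1
      conv_lhs => rw [← h3]
      exact hπc _ _
    · intro v _
      show π ⟨↑v, hVJ v.2⟩ (f w⁻¹) = f w⁻¹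
      obtain ⟨c, ⟨c', hc'⟩, hvmat⟩ := (hV' ↑v).1 v.2
      have hmU : w⁻¹ * ↑v * w ∈ U := (hU' _).2 ⟨-c, conjV_coe w ↑v hw c hvmat⟩
      have h1 : f (w⁻¹ * ↑v) = f w⁻¹ := by
        have h2 := hSleft f hffix _ hmU w⁻¹
        rw [show (w⁻¹ * ↑v * w) * w⁻¹ = w⁻¹ * ↑v by group] at h2
        exact h2
      have h2 := hind f hfi w⁻¹ (⟨↑v, hVJ v.2⟩ : ↥Jsub)
      have h3 : π (⟨↑v, hVJ v.2⟩ : ↥Jsub)⁻¹ (f w⁻¹) = f w⁻¹ := by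
        rw [← h2]; exact h1
      conv_lhs => rw [← h3]
      exact hπc _ _
  -- reconstruction
  have hrecon : ∀ (f : Matrix.SpecialLinearGroup (Fin 2) (ZMod (p ^ n)) → W),
      f ∈ indUp Jsub π ⊓
        fixedSub (ltRep (Matrix.SpecialLinearGroup (Fin 2) (ZMod (p ^ n))) W) U →
      F (f 1, f w⁻¹) = f := by
    intro f hf
    obtain ⟨hf1, hf2⟩ := Submodule.mem_inf.mp hf
    funext g
    simp only [hFdef]
    by_cases h : IsUnit ((↑g : Matrix (Fin 2) (Fin 2) (ZMod (p ^ n))) 1 0)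
    · rw [dif_pos h]
      set Jg := elemJm h.unit ((↑g : Matrix (Fin 2) (Fin 2) (ZMod (p ^ n))) 1 1) with hJg
      have hd := decomp w hw g h.unit h.unit_spec
      have e1 : f g = f (w * Jg) := by
        conv_lhs => rw [hd]
        rw [mul_assoc]
        exact hSleft f hf2 _ (hUmem _) _
      have e2 : w * Jg = w⁻¹ * ↑((⟨negE, hnegJ⟩ : ↥Jsub) * ⟨Jg, hJmMem _ _⟩) := by
        show w * Jg = w⁻¹ * (negE * Jg)
        rw [← w_sq w hw]
        group
      have e3 := hind f hf1 w⁻¹ ((⟨negE, hnegJ⟩ : ↥Jsub) * ⟨Jg, hJmMem _ _⟩)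
      rw [e1, e2, e3]
    · rw [dif_neg h]
      have e1 := hind f hf1 1 (⟨g, (hJ' g).2 h⟩ : ↥Jsub)
      rw [one_mul] at e1
      exact e1.symm
  -- assemble the equivalence
  refine ⟨LinearEquiv.ofLinear
    ({ toFun := fun f => ⟨((f : Matrix.SpecialLinearGroup (Fin 2) (ZMod (p ^ n)) → W) 1,
         (f : Matrix.SpecialLinearGroup (Fin 2) (ZMod (p ^ n)) → W) w⁻¹), hTmem _ f.2⟩
       map_add' := by intro f g; ext <;> rfl
       map_smul' := by intro c f; ext <;> rfl })
    ({ toFun := fun z => ⟨F ↑z, hFS _ z.2⟩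
       map_add' := by intro a b; ext g; exact congrFun (hFadd _ _) g
       map_smul' := by intro c a; ext g; exact congrFun (hFsmul c _) g })
    ?_ ?_, ?_⟩
  · apply LinearMap.ext
    intro z
    apply Subtype.ext
    exact Prod.ext (hF1 _) (hFw _)
  · apply LinearMap.ext
    intro f
    apply Subtype.ext
    exact hrecon _ f.2
  · -- equivariance
    intro l x hx
    have hxi := (Submodule.mem_inf.mp x.2).1
    apply Prod.ext
    · show (↑x : Matrix.SpecialLinearGroup (Fin 2) (ZMod (p ^ n)) → W) ((↑l)⁻¹ * 1)
        = π (Subgroup.inclusion hLJ l)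
          ((↑x : Matrix.SpecialLinearGroup (Fin 2) (ZMod (p ^ n)) → W) 1)
      have h2 := hind (↑x) hxi 1 ((⟨↑l, hLJ l.2⟩ : ↥Jsub))⁻¹
      rw [one_mul, inv_inv] at h2
      rw [mul_one]
      exact h2
    · show (↑x : Matrix.SpecialLinearGroup (Fin 2) (ZMod (p ^ n)) → W) ((↑l)⁻¹ * w⁻¹)
        = π (Subgroup.inclusion hLJ (conjHom L w hwL l))
          ((↑x : Matrix.SpecialLinearGroup (Fin 2) (ZMod (p ^ n)) → W) w⁻¹)
      have h2 := hind (↑x) hxi w⁻¹ ((⟨w * ↑l * w⁻¹, hLJ (hwL ↑l l.2)⟩ : ↥Jsub))⁻¹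
      have h3 : w⁻¹ * ↑(((⟨w * ↑l * w⁻¹, hLJ (hwL ↑l l.2)⟩ : ↥Jsub))⁻¹) = (↑l)⁻¹ * w⁻¹ := by
        show w⁻¹ * (w * ↑l * w⁻¹)⁻¹ = (↑l)⁻¹ * w⁻¹
        group
      rw [h3, inv_inv] at h2
      exact h2


end Statement18


end Parahoric
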